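/- Let K : [0,1] → ℝ be convex, positive, differentiable at 0 and at 1, and satisfy K(p) ≥ max((1−p)K(0), pK(1)) for all p ∈ [0,1]. Then δ_* = min(K(1) − K′(1), K(0) + K′(0)) is nonnegative and is the largest δ ≥ 0 such that K(p) ≥ (1−p)K(0) + pδ and K(p) ≥ (1−p)δ + pK(1) hold for all p ∈ [0,1]. (Here K(p) = C(1−p, p) is the transition cost over the full probability simplex A_i = Ξ_2, with deterministic costs C_1 = K(0), C_2 = K(1); the two displayed inequalities are the monotone δ-causality conditions.) -/

import Mathlib

open Set Filter Topology

private lemma nb0 : (𝓝[Set.Icc (0:ℝ) 1 \ {0}] 0).NeBot := by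
  rw [Set.Icc_diff_left]
  exact mem_closure_iff_nhdsWithin_neBot.mp (by rw [closure_Ioc one_ne_zero.symm]; exact ⟨le_refl 0, zero_le_one⟩)

private lemma nb1 : (𝓝[Set.Icc (0:ℝ) 1 \ {1}] 1).NeBot := by
  rw [Set.Icc_sdiff_right]
  exact mem_closure_iff_nhdsWithin_neBot.mp (by rw [closure_Ico one_ne_zero.symm]; exact ⟨zero_le_one, le_refl 1⟩)

private lemma deriv0_ge (K : ℝ → ℝ) (k₀ c : ℝ)
    (hd : HasDerivWithinAt K k₀ (Set.Icc (0:ℝ) 1) 0)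
    (h : ∀ p ∈ Set.Icc (0:ℝ) 1, K 0 + c * p ≤ K p) : c ≤ k₀ := by
  haveI := nb0
  rw [hasDerivWithinAt_iff_tendsto_slope] at hd
  refine ge_of_tendsto hd ?_
  filter_upwards [self_mem_nhdsWithin] with q hq
  obtain ⟨⟨hq0, hq1⟩, hqne⟩ := hq
  have hq0' : 0 < q := lt_of_le_of_ne hq0 (Ne.symm hqne)
  rw [slope_def_field, sub_zero, le_div_iff₀ hq0']
  have := h q ⟨hq0, hq1⟩
  linarith

private lemma deriv1_le (K : ℝ → ℝ) (k₁ c : ℝ)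
    (hd : HasDerivWithinAt K k₁ (Set.Icc (0:ℝ) 1) 1)
    (h : ∀ p ∈ Set.Icc (0:ℝ) 1, K 1 + c * (p - 1) ≤ K p) : k₁ ≤ c := by
  haveI := nb1
  rw [hasDerivWithinAt_iff_tendsto_slope] at hd
  refine le_of_tendsto hd ?_
  filter_upwards [self_mem_nhdsWithin] with q hq
  obtain ⟨⟨hq0, hq1⟩, hqne⟩ := hq
  have hq1' : q - 1 < 0 := by
    have := lt_of_le_of_ne hq1 hqne; linarith
  rw [slope_def_field, div_le_iff_of_neg hq1']
  have := h q ⟨hq0, hq1⟩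
  linarith

private lemma tangent0 (K : ℝ → ℝ) (k₀ : ℝ)
    (hconv : ConvexOn ℝ (Set.Icc (0:ℝ) 1) K)
    (hd : HasDerivWithinAt K k₀ (Set.Icc (0:ℝ) 1) 0) :
    ∀ p ∈ Set.Icc (0:ℝ) 1, K 0 + k₀ * p ≤ K p := by
  haveI := nb0
  intro p hp
  rcases eq_or_lt_of_le hp.1 with h0 | h0
  · simp [← h0]
  have key : k₀ ≤ (K p - K 0) / p := by
    rw [hasDerivWithinAt_iff_tendsto_slope] at hd
    refine le_of_tendsto hd ?_
    have hlt : ∀ᶠ q in 𝓝[Set.Icc (0:ℝ) 1 \ {0}] 0, q < p :=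
      (eventually_lt_nhds h0).filter_mono nhdsWithin_le_nhds
    filter_upwards [self_mem_nhdsWithin, hlt] with q hq hqp
    obtain ⟨hqs, hqne⟩ := hq
    have := hconv.secant_mono (Set.left_mem_Icc.mpr zero_le_one) hqs hp hqne (ne_of_gt h0) hqp.le
    simpa [slope_def_field] using this
  rw [le_div_iff₀ h0] at key
  linarith

private lemma tangent1 (K : ℝ → ℝ) (k₁ : ℝ)
    (hconv : ConvexOn ℝ (Set.Icc (0:ℝ) 1) K)
    (hd : HasDerivWithinAt K k₁ (Set.Icc (0:ℝ) 1) 1) :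
    ∀ p ∈ Set.Icc (0:ℝ) 1, K 1 + k₁ * (p - 1) ≤ K p := by
  haveI := nb1
  intro p hp
  rcases eq_or_lt_of_le hp.2 with h1 | h1
  · simp [h1]
  have key : (K p - K 1) / (p - 1) ≤ k₁ := by
    rw [hasDerivWithinAt_iff_tendsto_slope] at hd
    refine ge_of_tendsto hd ?_
    have hgt : ∀ᶠ q in 𝓝[Set.Icc (0:ℝ) 1 \ {1}] 1, p < q :=
      (eventually_gt_nhds h1).filter_mono nhdsWithin_le_nhds
    filter_upwards [self_mem_nhdsWithin, hgt] with q hq hqp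
    obtain ⟨hqs, hqne⟩ := hq
    have := hconv.secant_mono (Set.right_mem_Icc.mpr zero_le_one) hp hqs (ne_of_lt h1) hqne hqp.le
    simpa [slope_def_field] using this
  have hp1 : p - 1 < 0 := by linarith
  rw [div_le_iff_of_neg hp1] at key
  linarith

/-- Maximum allowable δ for a convex cost on the full simplex.
Let `K : [0,1] → ℝ` be convex, positive, differentiable (within `[0,1]`) at the
endpoints, and monotone causal: `K(p) ≥ max((1−p)K(0), pK(1))`.  Then
`δ_* = min(K(1) − K′(1), K(0) + K′(0))` is the largest `δ ≥ 0` such that the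
monotone δ-causality conditions `K(p) ≥ (1−p)K(0) + pδ` and
`K(p) ≥ (1−p)δ + pK(1)` hold for all `p ∈ [0,1]`. -/
theorem stmt4 (K : ℝ → ℝ) (k₀ k₁ : ℝ)
    (hconv : ConvexOn ℝ (Set.Icc (0:ℝ) 1) K)
    (hpos : ∀ p ∈ Set.Icc (0:ℝ) 1, 0 < K p)
    (hd₀ : HasDerivWithinAt K k₀ (Set.Icc (0:ℝ) 1) 0)
    (hd₁ : HasDerivWithinAt K k₁ (Set.Icc (0:ℝ) 1) 1)
    (hMC : ∀ p ∈ Set.Icc (0:ℝ) 1, max ((1 - p) * K 0) (p * K 1) ≤ K p) :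
    IsGreatest {δ : ℝ | 0 ≤ δ ∧ ∀ p ∈ Set.Icc (0:ℝ) 1,
        (1 - p) * K 0 + p * δ ≤ K p ∧ (1 - p) * δ + p * K 1 ≤ K p}
      (min (K 1 - k₁) (K 0 + k₀)) := by
  have t0 := tangent0 K k₀ hconv hd₀
  have t1 := tangent1 K k₁ hconv hd₁
  have hk1 : k₁ ≤ K 1 := by
    refine deriv1_le K k₁ (K 1) hd₁ fun p hp => ?_
    have := le_trans (le_max_right _ _) (hMC p hp)
    linarith
  have hk0 : -(K 0) ≤ k₀ := by
    refine deriv0_ge K k₀ (-(K 0)) hd₀ fun p hp => ?_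
    have := le_trans (le_max_left _ _) (hMC p hp)
    linarith
  constructor
  · refine ⟨le_min (by linarith) (by linarith), fun p hp => ⟨?_, ?_⟩⟩
    · have h1 := mul_le_mul_of_nonneg_left (min_le_right (K 1 - k₁) (K 0 + k₀)) hp.1
      have := t0 p hp
      nlinarith
    · have h2 := mul_le_mul_of_nonneg_left (min_le_left (K 1 - k₁) (K 0 + k₀))
        (by linarith [hp.2] : (0:ℝ) ≤ 1 - p)
      have := t1 p hp
      nlinarith
  · rintro δ ⟨hδ0, hδ⟩
    refine le_min ?_ ?_
    · have : k₁ ≤ K 1 - δ := by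
        refine deriv1_le K k₁ (K 1 - δ) hd₁ fun p hp => ?_
        have := (hδ p hp).2
        nlinarith
      linarith
    · have : δ - K 0 ≤ k₀ := by
        refine deriv0_ge K k₀ (δ - K 0) hd₀ fun p hp => ?_
        have := (hδ p hp).1
        nlinarith
      linarith
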